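/- For every a ∈ (0, π): lim_{α → 0⁺} sup_{ψ ∈ (0, a]} | (α^{3/2} · e^{ψ²/α} · sin(ψ) / (2√π · ψ)) · K_α(ψ) − 1 | = 0. In other words, K_α(ψ) ∼ (e^{−ψ²/α}/α^{3/2}) · 2√π · ψ/sin(ψ) as α → 0, uniformly on class angles bounded away from π. -/

import Mathlib

open Real

/-- The SU(2) heat kernel at time `α`, as a function of the class angle `ψ`:
`K_α(ψ) = Σ_{m≥1} m · e^{-α(m²-1)/4} · sin(mψ)/sin(ψ)`. -/
noncomputable def Kheat (α ψ : ℝ) : ℝ :=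
  ∑' m : ℕ, ((m : ℝ) + 1) * Real.exp (-α * (((m : ℝ) + 1) ^ 2 - 1) / 4) *
    Real.sin (((m : ℝ) + 1) * ψ) / Real.sin ψ


section HeatAux
open Filter

lemma kheat_eq (α ψ : ℝ) (hα : 0 < α) (hs : Real.sin ψ ≠ 0) :
    Kheat α ψ = Real.exp (α/4) / (2 * Real.sin ψ) *
      HurwitzZeta.sinKernel (ψ/(2*π)) (α/(4*π)) := by
  have ht : 0 < α/(4*π) := by positivity
  have h := HurwitzZeta.hasSum_nat_sinKernel (ψ/(2*π)) ht
  have h1 : HasSum (fun n : ℕ ↦ 2 * (n:ℝ) * Real.sin (2 * π * (ψ/(2*π)) * n) *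
      Real.exp (-π * (n:ℝ) ^ 2 * (α/(4*π)))) (HurwitzZeta.sinKernel (ψ/(2*π)) (α/(4*π))) := h
  have h2 := (hasSum_nat_add_iff' (f := fun n : ℕ ↦ 2 * (n:ℝ) * Real.sin (2 * π * (ψ/(2*π)) * n) *
      Real.exp (-π * (n:ℝ) ^ 2 * (α/(4*π)))) 1).2 h1
  simp only [Finset.range_one, Finset.sum_singleton, Nat.cast_zero, mul_zero, zero_mul,
    sub_zero, Nat.cast_add, Nat.cast_one] at h2
  have h3 := h2.mul_left (Real.exp (α/4) / (2 * Real.sin ψ))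
  rw [Kheat]
  have hfun : ∀ m : ℕ, (Real.exp (α/4) / (2 * Real.sin ψ)) *
      (2 * ((m:ℝ)+1) * Real.sin (2 * π * (ψ/(2*π)) * ((m:ℝ)+1)) *
        Real.exp (-π * ((m:ℝ)+1) ^ 2 * (α/(4*π)))) =
      ((m : ℝ) + 1) * Real.exp (-α * (((m : ℝ) + 1) ^ 2 - 1) / 4) *
        Real.sin (((m : ℝ) + 1) * ψ) / Real.sin ψ := by
    intro m
    have hπ : (π:ℝ) ≠ 0 := Real.pi_ne_zero
    have e1 : 2 * π * (ψ/(2*π)) * ((m:ℝ)+1) = ((m:ℝ)+1) * ψ := by field_simp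
    have e2 : -π * ((m:ℝ)+1) ^ 2 * (α/(4*π)) = -α * ((m:ℝ)+1)^2 / 4 := by field_simp
    have e3 : -α * (((m : ℝ) + 1) ^ 2 - 1) / 4 = -α * ((m:ℝ)+1)^2/4 + α/4 := by ring
    rw [e1, e2, e3, Real.exp_add]
    field_simp
  rw [← h3.tsum_eq]
  exact tsum_congr fun m => (hfun m).symm


lemma sinK_eq (b α : ℝ) (hα : 0 < α) :
    HurwitzZeta.sinKernel b (α/(4*π)) =
      ((4*π/α) ^ ((3:ℝ)/2)) * HurwitzZeta.oddKernel b (4*π/α) := by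
  have hx : (0:ℝ) < 4*π/α := by positivity
  have h := HurwitzZeta.oddKernel_functional_equation b (4*π/α)
  have h1 : (1:ℝ)/(4*π/α) = α/(4*π) := by field_simp
  rw [h1] at h
  have h2 : ((4*π/α:ℝ) ^ ((3:ℝ)/2)) ≠ 0 := by positivity
  rw [h]
  field_simp

lemma odd_decomp (b x : ℝ) (hx : 0 < x) :
    HasSum (fun k : ℕ ↦
      (((k:ℝ)+1) + b) * Real.exp (-π * (((k:ℝ)+1) + b)^2 * x)
      + ((-((k:ℝ)+1)) + b) * Real.exp (-π * ((-((k:ℝ)+1)) + b)^2 * x))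
      (HurwitzZeta.oddKernel b x - b * Real.exp (-π * b^2 * x)) := by
  have h := HurwitzZeta.hasSum_int_oddKernel b hx
  have h2 := h.nat_add_neg
  have h3 := (hasSum_nat_add_iff' (f := fun n : ℕ ↦
      (((n:ℤ):ℝ) + b) * Real.exp (-π * (((n:ℤ):ℝ) + b)^2 * x)
      + (((-n:ℤ):ℝ) + b) * Real.exp (-π * (((-n:ℤ):ℝ) + b)^2 * x)) 1).2 h2
  simp only [Finset.range_one, Finset.sum_singleton, Nat.cast_zero, Int.cast_zero,
    neg_zero, zero_add, Int.cast_natCast, Int.cast_neg, Nat.cast_add, Nat.cast_one] at h3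
  have h4 : HurwitzZeta.oddKernel b x + b * Real.exp (-π * b ^ 2 * x) -
      (b * Real.exp (-π * b ^ 2 * x) + b * Real.exp (-π * b ^ 2 * x)) =
      HurwitzZeta.oddKernel b x - b * Real.exp (-π * b ^ 2 * x) := by ring
  rw [h4] at h3
  refine h3.congr_fun fun k => ?_
  push_cast
  ring_nf


set_option maxHeartbeats 1000000 in
lemma pair_bound (a α ψ K : ℝ) (haπ : a < π) (hα : 0 < α) (hα1 : α ≤ 1)
    (hψ : 0 < ψ) (hψa : ψ ≤ a) (hK : 1 ≤ K) :
    |(2*π*K+ψ) * Real.exp (-(2*π*K+ψ)^2/α) + (ψ-2*π*K) * Real.exp (-(2*π*K-ψ)^2/α)|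
      ≤ ψ * Real.exp (-ψ^2/α) * ((2+16*π^2) * K^2 / α *
          (Real.exp (-(2*π*(π-a))/α) * Real.exp (-(2*π*(π-a))*K))) := by
  have ha : 0 < a := lt_of_lt_of_le hψ hψa
  have hπa : 0 < π - a := sub_pos.2 haπ
  have hK0 : 0 < K := lt_of_lt_of_le one_pos hK
  have hπ := Real.pi_pos
  set u : ℝ := 4*π*K*ψ/α with hu_def
  have hu0 : 0 ≤ u := by positivity
  have hu_le : u ≤ 4*π*K*a/α := by rw [hu_def]; gcongr
  have h3 : 2*π*K * (2 * u * Real.exp u) = 16*π^2*K^2/α * ψ * Real.exp u := by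
    rw [hu_def]; field_simp [hα.ne']; ring
  clear_value u
  have e1 : Real.exp (-(2*π*K+ψ)^2/α)
      = Real.exp (-ψ^2/α) * Real.exp (-(4*π^2*K^2)/α) * Real.exp (-u) := by
    rw [← Real.exp_add, ← Real.exp_add, hu_def]
    congr 1
    field_simp [hα.ne']
    ring
  have e2 : Real.exp (-(2*π*K-ψ)^2/α)
      = Real.exp (-ψ^2/α) * Real.exp (-(4*π^2*K^2)/α) * Real.exp u := by
    rw [← Real.exp_add, ← Real.exp_add, hu_def]
    congr 1
    field_simp [hα.ne']
    ring
  have hfactor : (2*π*K+ψ) * Real.exp (-(2*π*K+ψ)^2/α)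
      + (ψ-2*π*K) * Real.exp (-(2*π*K-ψ)^2/α)
      = Real.exp (-ψ^2/α) * Real.exp (-(4*π^2*K^2)/α) *
        (ψ * (Real.exp u + Real.exp (-u)) - 2*π*K * (Real.exp u - Real.exp (-u))) := by
    rw [e1, e2]; ring
  rw [hfactor, abs_mul, abs_of_pos (by positivity :
    (0:ℝ) < Real.exp (-ψ^2/α) * Real.exp (-(4*π^2*K^2)/α))]
  have hEm_le_Eu : Real.exp (-u) ≤ Real.exp u := Real.exp_le_exp.2 (by linarith)
  have hsinh : Real.exp u - Real.exp (-u) ≤ 2 * u * Real.exp u := by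
    have h1 : 1 - 2*u ≤ Real.exp (-(2*u)) := by
      have := Real.add_one_le_exp (-(2*u)); linarith
    have h2 : Real.exp (-u) = Real.exp u * Real.exp (-(2*u)) := by
      rw [← Real.exp_add]; congr 1; ring
    nlinarith [Real.exp_pos u]
  have key1 : |ψ * (Real.exp u + Real.exp (-u)) - 2*π*K * (Real.exp u - Real.exp (-u))|
      ≤ ψ * ((2+16*π^2) * K^2 / α) * Real.exp u := by
    have hy : (0:ℝ) ≤ 2*π*K * (Real.exp u - Real.exp (-u)) :=
      mul_nonneg (by positivity) (by linarith)
    have habs : |ψ * (Real.exp u + Real.exp (-u)) - 2*π*K * (Real.exp u - Real.exp (-u))|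
        ≤ |ψ * (Real.exp u + Real.exp (-u))| + |2*π*K * (Real.exp u - Real.exp (-u))| := by
      rw [sub_eq_add_neg]
      exact (abs_add_le _ _).trans (by rw [abs_neg])
    have hx1 : |ψ * (Real.exp u + Real.exp (-u))| = ψ * (Real.exp u + Real.exp (-u)) :=
      abs_of_pos (by positivity)
    rw [hx1, abs_of_nonneg hy] at habs
    have hb1 : ψ * (Real.exp u + Real.exp (-u)) ≤ 2 * ψ * Real.exp u := by nlinarith
    have hb2 : 2*π*K * (Real.exp u - Real.exp (-u)) ≤ 16*π^2*K^2/α * ψ * Real.exp u := by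
      have := mul_le_mul_of_nonneg_left hsinh (by positivity : (0:ℝ) ≤ 2*π*K)
      linarith [h3 ▸ this]
    have hKsq : (1:ℝ) ≤ K^2 := by nlinarith
    have hb3 : (2:ℝ) + 16*π^2*K^2/α ≤ (2+16*π^2) * K^2 / α := by
      have h4 : (2+16*π^2) * K^2 / α = 2*K^2/α + 16*π^2*K^2/α := by ring
      have h5 : (2:ℝ) ≤ 2*K^2/α := by
        rw [le_div_iff₀ hα]; nlinarith
      linarith
    have hb4 : 2 * ψ * Real.exp u + 16*π^2*K^2/α * ψ * Real.exp u
        ≤ ψ * ((2+16*π^2) * K^2 / α) * Real.exp u := by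
      have h6 : 2 * ψ * Real.exp u + 16*π^2*K^2/α * ψ * Real.exp u
          = ψ * (2 + 16*π^2*K^2/α) * Real.exp u := by ring
      rw [h6]
      have := mul_le_mul_of_nonneg_left hb3 hψ.le
      exact mul_le_mul_of_nonneg_right (by nlinarith) (Real.exp_pos u).le
    linarith
  have key2 : Real.exp (-(4*π^2*K^2)/α) * Real.exp u
      ≤ Real.exp (-(2*π*(π-a))/α) * Real.exp (-(2*π*(π-a))*K) := by
    rw [← Real.exp_add, ← Real.exp_add]
    apply Real.exp_le_exp.2
    have A1 : K*(π-a) ≤ π*K - a := by nlinarith [mul_nonneg ha.le (sub_nonneg.2 hK)]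
    have A2 : 4*π*(π-a)*K^2 ≤ 4*π*K*(π*K - a) := by
      have := mul_le_mul_of_nonneg_left A1 (by positivity : (0:ℝ) ≤ 4*π*K)
      nlinarith
    have hKα : K*α ≤ K := mul_le_of_le_one_right hK0.le hα1
    have hKsq : (1:ℝ) ≤ K^2 := by nlinarith
    have A3 : 1 + K*α ≤ 2*K^2 := by nlinarith
    have hnum : 4*π*K*a - 4*π^2*K^2 ≤ -(2*π*(π-a)) - (2*π*(π-a))*K*α := by
      have A4 := mul_le_mul_of_nonneg_left A3 (by positivity : (0:ℝ) ≤ 2*π*(π-a))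
      nlinarith
    have hstep : -(4*π^2*K^2)/α + u ≤ (4*π*K*a - 4*π^2*K^2)/α := by
      have : (4*π*K*a - 4*π^2*K^2)/α = 4*π*K*a/α + -(4*π^2*K^2)/α := by ring
      linarith
    have hstep2 : (4*π*K*a - 4*π^2*K^2)/α ≤ (-(2*π*(π-a)) - (2*π*(π-a))*K*α)/α := by
      gcongr
    have hstep3 : (-(2*π*(π-a)) - (2*π*(π-a))*K*α)/α = -(2*π*(π-a))/α + -(2*π*(π-a))*K := by
      field_simp
      ring
    linarith
  calc Real.exp (-ψ^2/α) * Real.exp (-(4*π^2*K^2)/α) *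
        |ψ * (Real.exp u + Real.exp (-u)) - 2*π*K * (Real.exp u - Real.exp (-u))|
      ≤ Real.exp (-ψ^2/α) * Real.exp (-(4*π^2*K^2)/α) *
        (ψ * ((2+16*π^2) * K^2 / α) * Real.exp u) := by
        apply mul_le_mul_of_nonneg_left key1 (by positivity)
    _ = ψ * Real.exp (-ψ^2/α) * ((2+16*π^2) * K^2 / α) *
        (Real.exp (-(4*π^2*K^2)/α) * Real.exp u) := by ring
    _ ≤ ψ * Real.exp (-ψ^2/α) * ((2+16*π^2) * K^2 / α) *
        (Real.exp (-(2*π*(π-a))/α) * Real.exp (-(2*π*(π-a))*K)) := by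
        apply mul_le_mul_of_nonneg_left key2 (by positivity)
    _ = ψ * Real.exp (-ψ^2/α) * ((2+16*π^2) * K^2 / α *
        (Real.exp (-(2*π*(π-a))/α) * Real.exp (-(2*π*(π-a))*K))) := by ring


lemma summable_w (c2 : ℝ) (hc : 0 < c2) :
    Summable (fun k : ℕ ↦ ((k:ℝ)+1)^2 * Real.exp (-c2*((k:ℝ)+1))) := by
  have hr : ‖Real.exp (-c2)‖ < 1 := by
    rw [Real.norm_eq_abs, abs_of_pos (Real.exp_pos _)]
    exact Real.exp_lt_one_iff.2 (by linarith)
  have h := (summable_pow_mul_geometric_of_norm_lt_one 2 hr).comp_injective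
    (Nat.succ_injective)
  refine h.congr fun k => ?_
  simp only [Function.comp_apply, Nat.succ_eq_add_one]
  push_cast
  rw [← Real.exp_nat_mul]
  push_cast
  ring_nf


set_option maxHeartbeats 1000000 in
lemma main_est (a : ℝ) (haπ : a < π) {α ψ : ℝ} (hα : 0 < α) (hα1 : α ≤ 1)
    (hψ : 0 < ψ) (hψa : ψ ≤ a) :
    |α ^ ((3:ℝ)/2) * Real.exp (ψ^2/α) * Real.sin ψ / (2 * Real.sqrt π * ψ) * Kheat α ψ - 1|
      ≤ (Real.exp (α/4) - 1) + Real.exp (α/4) * ((2+16*π^2) / α * Real.exp (-(2*π*(π-a))/α) *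
          ∑' k : ℕ, ((k:ℝ)+1)^2 * Real.exp (-(2*π*(π-a))*((k:ℝ)+1))) := by
  have hπ := Real.pi_pos
  have ha : 0 < a := lt_of_lt_of_le hψ hψa
  have hπa : 0 < π - a := sub_pos.2 haπ
  have hψπ : ψ < π := lt_of_le_of_lt hψa haπ
  have hsin : 0 < Real.sin ψ := Real.sin_pos_of_pos_of_lt_pi hψ hψπ
  have hx : (0:ℝ) < 4*π/α := by positivity
  set b : ℝ := ψ/(2*π) with hb_def
  set x : ℝ := 4*π/α with hx_def
  set c2 : ℝ := 2*π*(π-a) with hc2_def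
  have hc2 : 0 < c2 := by rw [hc2_def]; positivity
  -- the tail sum P
  have hdec := odd_decomp b x hx
  set P : ℝ := ∑' k : ℕ,
      ((((k:ℝ)+1) + b) * Real.exp (-π * (((k:ℝ)+1) + b)^2 * x)
      + ((-((k:ℝ)+1)) + b) * Real.exp (-π * ((-((k:ℝ)+1)) + b)^2 * x)) with hP_def
  have hPsum : P = HurwitzZeta.oddKernel b x - b * Real.exp (-π * b^2 * x) := hdec.tsum_eq
  have hQ : -π * b^2 * x = -ψ^2/α := by
    rw [hb_def, hx_def]; field_simp; ring
  have hodd : HurwitzZeta.oddKernel b x = b * Real.exp (-ψ^2/α) + P := by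
    rw [hPsum, hQ]; ring
  -- rpow algebra
  have hrp : α ^ ((3:ℝ)/2) * x ^ ((3:ℝ)/2) = 4*π*(2*Real.sqrt π) := by
    rw [hx_def, ← Real.mul_rpow hα.le hx.le]
    have h1 : α * (4*π/α) = 4*π := by field_simp
    rw [h1, show (3:ℝ)/2 = 1 + 1/2 by norm_num, Real.rpow_add (by positivity),
      Real.rpow_one, ← Real.sqrt_eq_rpow]
    have h2 : Real.sqrt (4*π) = 2 * Real.sqrt π := by
      rw [show (4*π:ℝ) = 2^2*π by ring, Real.sqrt_mul (by positivity), Real.sqrt_sq (by norm_num)]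
    rw [h2]
  have hs : (0:ℝ) < Real.sqrt π := Real.sqrt_pos.2 hπ
  -- main algebraic identity
  have hE : α ^ ((3:ℝ)/2) * Real.exp (ψ^2/α) * Real.sin ψ / (2 * Real.sqrt π * ψ) * Kheat α ψ
      = Real.exp (α/4) + Real.exp (α/4) * (2*π/ψ) * Real.exp (ψ^2/α) * P := by
    rw [kheat_eq α ψ hα hsin.ne', sinK_eq b α hα, ← hx_def, hodd]
    have hexp : Real.exp (-ψ^2/α) = (Real.exp (ψ^2/α))⁻¹ := by
      rw [← Real.exp_neg]; congr 1; ring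
    have hα32 : (0:ℝ) < α ^ ((3:ℝ)/2) := Real.rpow_pos_of_pos hα _
    have hx32 : (0:ℝ) < x ^ ((3:ℝ)/2) := Real.rpow_pos_of_pos hx _
    rw [hexp, hb_def]
    field_simp
    linear_combination (ψ + 2*π*Real.exp (ψ^2/α)*P) * hrp
  -- termwise bound on P
  set T : ℝ := ∑' k : ℕ, ((k:ℝ)+1)^2 * Real.exp (-c2*((k:ℝ)+1)) with hT_def
  set Cψ : ℝ := ψ * Real.exp (-ψ^2/α) / (2*π) * ((2+16*π^2)/α * Real.exp (-c2/α)) with hC_def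
  have hw : Summable (fun k : ℕ ↦ ((k:ℝ)+1)^2 * Real.exp (-c2*((k:ℝ)+1))) := summable_w c2 hc2
  have hfk : ∀ k : ℕ,
      |(((k:ℝ)+1) + b) * Real.exp (-π * (((k:ℝ)+1) + b)^2 * x)
        + ((-((k:ℝ)+1)) + b) * Real.exp (-π * ((-((k:ℝ)+1)) + b)^2 * x)|
      ≤ Cψ * (((k:ℝ)+1)^2 * Real.exp (-c2*((k:ℝ)+1))) := by
    intro k
    set K : ℝ := (k:ℝ)+1 with hK_def
    have hK1 : (1:ℝ) ≤ K := by rw [hK_def]; exact_mod_cast Nat.le_add_left 1 k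
    have e1 : -π * (K + b)^2 * x = -(2*π*K+ψ)^2/α := by
      rw [hb_def, hx_def]; field_simp; ring
    have e2 : -π * (-K + b)^2 * x = -(2*π*K-ψ)^2/α := by
      rw [hb_def, hx_def]; field_simp; ring
    have e3 : K + b = (2*π*K+ψ)/(2*π) := by rw [hb_def]; field_simp
    have e4 : -K + b = (ψ-2*π*K)/(2*π) := by rw [hb_def]; field_simp; ring
    have hterm : (K + b) * Real.exp (-π * (K + b)^2 * x)
        + (-K + b) * Real.exp (-π * (-K + b)^2 * x)
        = (1/(2*π)) * ((2*π*K+ψ) * Real.exp (-(2*π*K+ψ)^2/α)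
          + (ψ-2*π*K) * Real.exp (-(2*π*K-ψ)^2/α)) := by
      rw [e1, e2, e3, e4]; ring
    rw [hterm, abs_mul, abs_of_pos (show (0:ℝ) < 1/(2*π) by positivity)]
    calc (1/(2*π)) * |(2*π*K+ψ) * Real.exp (-(2*π*K+ψ)^2/α)
          + (ψ-2*π*K) * Real.exp (-(2*π*K-ψ)^2/α)|
        ≤ (1/(2*π)) * (ψ * Real.exp (-ψ^2/α) * ((2+16*π^2) * K^2 / α *
            (Real.exp (-c2/α) * Real.exp (-c2*K)))) := by
          apply mul_le_mul_of_nonneg_left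
            (pair_bound a α ψ K haπ hα hα1 hψ hψa hK1) (by positivity)
      _ = Cψ * (K^2 * Real.exp (-c2*K)) := by rw [hC_def]; ring
  have hsf : Summable (fun k : ℕ ↦
      |(((k:ℝ)+1) + b) * Real.exp (-π * (((k:ℝ)+1) + b)^2 * x)
        + ((-((k:ℝ)+1)) + b) * Real.exp (-π * ((-((k:ℝ)+1)) + b)^2 * x)|) :=
    Summable.of_nonneg_of_le (fun k => abs_nonneg _) hfk (hw.mul_left Cψ)
  have hPabs : |P| ≤ Cψ * T := by
    have h1 : |P| ≤ ∑' k : ℕ,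
        |(((k:ℝ)+1) + b) * Real.exp (-π * (((k:ℝ)+1) + b)^2 * x)
          + ((-((k:ℝ)+1)) + b) * Real.exp (-π * ((-((k:ℝ)+1)) + b)^2 * x)| := by
      rw [hP_def]
      have hsf' : Summable (fun k : ℕ ↦
          ‖(((k:ℝ)+1) + b) * Real.exp (-π * (((k:ℝ)+1) + b)^2 * x)
            + ((-((k:ℝ)+1)) + b) * Real.exp (-π * ((-((k:ℝ)+1)) + b)^2 * x)‖) := by
        simpa only [Real.norm_eq_abs] using hsf
      have h0 := norm_tsum_le_tsum_norm hsf'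
      simpa only [Real.norm_eq_abs] using h0
    have h2 := Summable.tsum_le_tsum hfk hsf (hw.mul_left Cψ)
    rw [tsum_mul_left, ← hT_def] at h2
    linarith
  -- assemble
  rw [hE]
  have hexpQ : (0:ℝ) < Real.exp (ψ^2/α) := Real.exp_pos _
  have hring : Real.exp (α/4) + Real.exp (α/4) * (2*π/ψ) * Real.exp (ψ^2/α) * P - 1
      = (Real.exp (α/4) - 1) + Real.exp (α/4) * (2*π/ψ) * Real.exp (ψ^2/α) * P := by ring
  rw [hring]
  have h3 : |(Real.exp (α/4) - 1) + Real.exp (α/4) * (2*π/ψ) * Real.exp (ψ^2/α) * P|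
      ≤ (Real.exp (α/4) - 1) + Real.exp (α/4) * (2*π/ψ) * Real.exp (ψ^2/α) * |P| := by
    refine (abs_add_le _ _).trans ?_
    have h4 : |Real.exp (α/4) - 1| = Real.exp (α/4) - 1 := by
      rw [abs_of_nonneg]
      have := Real.one_le_exp (show (0:ℝ) ≤ α/4 by positivity)
      linarith
    rw [h4, abs_mul, abs_of_pos (show (0:ℝ) < Real.exp (α/4) * (2*π/ψ) * Real.exp (ψ^2/α) by positivity)]
  refine h3.trans ?_
  have h5 : Real.exp (α/4) * (2*π/ψ) * Real.exp (ψ^2/α) * |P|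
      ≤ Real.exp (α/4) * (2*π/ψ) * Real.exp (ψ^2/α) * (Cψ * T) := by
    apply mul_le_mul_of_nonneg_left hPabs (by positivity)
  have h6 : Real.exp (α/4) * (2*π/ψ) * Real.exp (ψ^2/α) * (Cψ * T)
      = Real.exp (α/4) * ((2+16*π^2) / α * Real.exp (-c2/α) * T) := by
    rw [hC_def]
    have hexp : Real.exp (-ψ^2/α) = (Real.exp (ψ^2/α))⁻¹ := by
      rw [← Real.exp_neg]; congr 1; ring
    rw [hexp]
    field_simp
  linarith [h5, h6.symm.le]


end HeatAux

/-- Uniform small-time asymptotics of the SU(2) heat kernel away from the antipode: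
for every `a ∈ (0, π)`,
`sup_{ψ ∈ (0,a]} |(α^{3/2} e^{ψ²/α} sin ψ / (2√π ψ)) K_α(ψ) - 1| → 0` as `α → 0⁺`,
i.e. `K_α(ψ) ∼ (e^{-ψ²/α}/α^{3/2}) · 2√π · ψ/sin ψ` uniformly on `(0, a]`. -/
theorem stmt15 (a : ℝ) (ha : a ∈ Set.Ioo (0 : ℝ) π) :
    Filter.Tendsto
      (fun α : ℝ => ⨆ ψ : Set.Ioc (0 : ℝ) a,
        |α ^ ((3 : ℝ) / 2) * Real.exp ((ψ : ℝ) ^ 2 / α) * Real.sin (ψ : ℝ) /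
            (2 * Real.sqrt π * (ψ : ℝ)) * Kheat α (ψ : ℝ) - 1|)
      (nhdsWithin 0 (Set.Ioi 0)) (nhds 0) := by
  obtain ⟨ha0, haπ⟩ := ha
  have hπ := Real.pi_pos
  set c2 : ℝ := 2*π*(π-a) with hc2_def
  have hc2 : 0 < c2 := by rw [hc2_def]; nlinarith
  set T : ℝ := ∑' k : ℕ, ((k:ℝ)+1)^2 * Real.exp (-c2*((k:ℝ)+1)) with hT_def
  haveI : Nonempty (Set.Ioc (0:ℝ) a) := ⟨⟨a, Set.right_mem_Ioc.mpr ha0⟩⟩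
  set D : ℝ → ℝ := fun α => (Real.exp (α/4) - 1) +
      Real.exp (α/4) * ((2+16*π^2) / α * Real.exp (-c2/α) * T) with hD_def
  have hD : Filter.Tendsto D (nhdsWithin 0 (Set.Ioi 0)) (nhds 0) := by
    have t1 : Filter.Tendsto (fun α : ℝ => Real.exp (α/4) - 1)
        (nhdsWithin 0 (Set.Ioi 0)) (nhds 0) := by
      have hcont : Continuous fun α : ℝ => Real.exp (α/4) - 1 := by continuity
      have h := hcont.tendsto 0
      simp only [Real.exp_zero, zero_div, sub_self] at h
      exact h.mono_left nhdsWithin_le_nhds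
    have t2 : Filter.Tendsto (fun α : ℝ => Real.exp (α/4))
        (nhdsWithin 0 (Set.Ioi 0)) (nhds 1) := by
      have hcont : Continuous fun α : ℝ => Real.exp (α/4) := by continuity
      have h := hcont.tendsto 0
      simp only [Real.exp_zero, zero_div] at h
      exact h.mono_left nhdsWithin_le_nhds
    have t3 : Filter.Tendsto (fun α : ℝ => (2+16*π^2) / α * Real.exp (-c2/α) * T)
        (nhdsWithin 0 (Set.Ioi 0)) (nhds 0) := by
      have hcomp : Filter.Tendsto (fun α : ℝ => c2 * α⁻¹)
          (nhdsWithin 0 (Set.Ioi 0)) Filter.atTop :=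
        Filter.Tendsto.const_mul_atTop hc2 tendsto_inv_nhdsGT_zero
      have h4 := (tendsto_pow_mul_exp_neg_atTop_nhds_zero 1).comp hcomp
      have h5 := h4.const_mul ((2+16*π^2)*T/c2)
      rw [mul_zero] at h5
      refine h5.congr' ?_
      filter_upwards [self_mem_nhdsWithin] with α hα
      have hα0 : (0:ℝ) < α := hα
      show ((2+16*π^2)*T/c2) * ((c2*α⁻¹)^1 * Real.exp (-(c2*α⁻¹)))
          = (2+16*π^2) / α * Real.exp (-c2/α) * T
      rw [pow_one, show -(c2*α⁻¹) = -c2/α by ring]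
      field_simp
    have := t1.add (t2.mul t3)
    simpa using this
  apply squeeze_zero' (Filter.Eventually.of_forall
    (fun α => Real.iSup_nonneg fun ψ => abs_nonneg _)) ?_ hD
  filter_upwards [Ioc_mem_nhdsGT_of_mem (Set.mem_Ico.mpr ⟨le_refl (0:ℝ), one_pos⟩)] with α hα
  exact ciSup_le fun ψ => main_est a haπ hα.1 hα.2 ψ.2.1 ψ.2.2
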